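/- (Polyhedral containment duality.) Let Φ : Matrix (Fin m) (Fin n) ℝ, ψ : Fin m → ℝ, R : Matrix (Fin k) (Fin n) ℝ, r : Fin k → ℝ, and suppose the set {x : Fin n → ℝ | Φ.mulVec x ≤ ψ} is nonempty. Then (for every x, Φ.mulVec x ≤ ψ implies R.mulVec x ≤ r) if and only if there exists a matrix Π : Matrix (Fin m) (Fin k) ℝ with all entries nonnegative such that Φᵀ * Π = Rᵀ and Πᵀ.mulVec ψ ≤ r. -/

import Mathlib

open Matrix Finset

section Cone

variable {E : Type*} [NormedAddCommGroup E] [InnerProductSpace ℝ E] [FiniteDimensional ℝ E]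

/-- the cone generated by finitely many vectors -/
def coneSet {N : ℕ} (v : Fin N → E) : Set E :=
  {x | ∃ c : Fin N → ℝ, (∀ i, 0 ≤ c i) ∧ ∑ i, c i • v i = x}

lemma reduce_step {N : ℕ} (v : Fin N → E) (c lam : Fin N → ℝ) (hc : ∀ i, 0 ≤ c i)
    (hsupp : ∀ i, c i = 0 → lam i = 0)
    (hsum : ∑ i, lam i • v i = 0)
    (hpos : ∃ i, 0 < lam i) :
    ∃ c'' : Fin N → ℝ, (∀ i, 0 ≤ c'' i) ∧ (∑ i, c'' i • v i = ∑ i, c i • v i) ∧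
      (Finset.univ.filter fun i => c'' i ≠ 0).card <
        (Finset.univ.filter fun i => c i ≠ 0).card := by
  classical
  obtain ⟨i₁, hi₁⟩ := hpos
  set T : Finset (Fin N) := Finset.univ.filter fun i => 0 < lam i with hT
  have hTne : T.Nonempty := ⟨i₁, by simp [hT, hi₁]⟩
  obtain ⟨i₀, hi₀T, hi₀⟩ := Finset.exists_mem_eq_inf' hTne (fun i => c i / lam i)
  set t : ℝ := T.inf' hTne (fun i => c i / lam i) with ht
  have hlami₀ : 0 < lam i₀ := by simpa [hT] using hi₀T
  have htnn : 0 ≤ t := by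
    rw [ht]
    apply Finset.le_inf'
    intro i hi
    have h2 : 0 < lam i := by simpa [hT] using hi
    exact div_nonneg (hc i) h2.le
  refine ⟨fun i => c i - t * lam i, ?_, ?_, ?_⟩
  · intro i
    simp only
    by_cases h : 0 < lam i
    · have hle : t ≤ c i / lam i := by
        rw [ht]; exact Finset.inf'_le _ (by simp [hT, h])
      have := (le_div_iff₀ h).mp hle
      linarith
    · push_neg at h
      nlinarith [hc i, mul_nonpos_of_nonneg_of_nonpos htnn h]
  · have : ∑ i, (c i - t * lam i) • v i
        = ∑ i, c i • v i - t • ∑ i, lam i • v i := by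
      rw [Finset.smul_sum, ← Finset.sum_sub_distrib]
      congr 1; ext i
      rw [sub_smul, smul_smul]
    rw [this, hsum, smul_zero, sub_zero]
  · apply Finset.card_lt_card
    constructor
    · intro i hi
      simp only [Finset.mem_filter, Finset.mem_univ, true_and] at hi ⊢
      intro h0
      apply hi
      rw [h0, hsupp i h0, mul_zero, sub_zero]
    · intro hsub
      have hci₀ : c i₀ ≠ 0 := by
        intro h0
        rw [hsupp i₀ h0] at hlami₀; exact lt_irrefl 0 hlami₀
      have hmem0 : i₀ ∈ Finset.univ.filter fun i => c i ≠ 0 := by simp [hci₀]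
      have := hsub hmem0
      simp only [Finset.mem_filter, Finset.mem_univ, true_and] at this
      apply this
      rw [hi₀]
      field_simp
      ring

lemma carath {N : ℕ} (v : Fin N → E) :
    ∀ (n : ℕ) (c : Fin N → ℝ), (Finset.univ.filter fun i => c i ≠ 0).card ≤ n →
      (∀ i, 0 ≤ c i) →
      ∃ c' : Fin N → ℝ, (∀ i, 0 ≤ c' i) ∧ (∑ i, c' i • v i = ∑ i, c i • v i) ∧
        LinearIndependent ℝ (fun i : {i // c' i ≠ 0} => v i) := by
  classical
  intro n
  induction n with
  | zero =>
    intro c hcard hc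
    have hempty : ∀ i, c i = 0 := by
      intro i
      by_contra h
      have : (Finset.univ.filter fun i => c i ≠ 0).Nonempty := ⟨i, by simp [h]⟩
      have := Finset.card_pos.mpr this
      omega
    refine ⟨c, hc, rfl, ?_⟩
    have : IsEmpty {i // c i ≠ 0} := ⟨fun ⟨i, hi⟩ => hi (hempty i)⟩
    exact linearIndependent_empty_type
  | succ n ih =>
    intro c hcard hc
    by_cases h : LinearIndependent ℝ (fun i : {i // c i ≠ 0} => v i)
    · exact ⟨c, hc, rfl, h⟩
    · obtain ⟨g, hg0, i₁, hi₁⟩ := Fintype.not_linearIndependent_iff.mp h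
      set lam : Fin N → ℝ := fun i => if h : c i ≠ 0 then g ⟨i, h⟩ else 0 with hlam
      have hsupp : ∀ i, c i = 0 → lam i = 0 := by
        intro i h0; simp [hlam, h0]
      have hsum : ∑ i, lam i • v i = 0 := by
        have h1 : ∑ i, lam i • v i
            = ∑ i ∈ Finset.univ.filter (fun i => c i ≠ 0), lam i • v i := by
          rw [Finset.sum_filter_of_ne]
          intro i _ hne
          by_contra h0
          exact hne (by rw [hsupp i h0, zero_smul])
        have h2 : ∑ i ∈ Finset.univ.filter (fun i => c i ≠ 0), lam i • v i
            = ∑ i : {i // c i ≠ 0}, g i • v i := by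
          rw [Finset.sum_subtype (p := fun i => c i ≠ 0)
            (Finset.univ.filter fun i => c i ≠ 0) (fun i => by simp) (fun i => lam i • v i)]
          apply Finset.sum_congr rfl
          rintro ⟨i, hi⟩ _
          simp [hlam, hi]
        rw [h1, h2, hg0]
      have key : ∀ lam' : Fin N → ℝ, (∀ i, c i = 0 → lam' i = 0) →
          (∑ i, lam' i • v i = 0) → (∃ i, 0 < lam' i) →
          ∃ c' : Fin N → ℝ, (∀ i, 0 ≤ c' i) ∧ (∑ i, c' i • v i = ∑ i, c i • v i) ∧
            LinearIndependent ℝ (fun i : {i // c' i ≠ 0} => v i) := by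
        intro lam' h1 h2 h3
        obtain ⟨c'', hnn, heq, hlt⟩ := reduce_step v c lam' hc h1 h2 h3
        obtain ⟨c', h4, h5, h6⟩ := ih c'' (by omega) hnn
        exact ⟨c', h4, h5.trans heq, h6⟩
      by_cases hp : ∃ i, 0 < lam i
      · exact key lam hsupp hsum hp
      · push_neg at hp
        apply key (-lam) (fun i h0 => by simp [hsupp i h0])
        · rw [← neg_zero, ← hsum, ← Finset.sum_neg_distrib]
          congr 1; ext i; rw [Pi.neg_apply, neg_smul]
        · refine ⟨i₁, ?_⟩
          have h1 : lam i₁ = g i₁ := by simp [hlam, i₁.2]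
          have h2 : lam ↑i₁ ≤ 0 := hp _
          have : lam ↑i₁ ≠ 0 := by rw [h1]; exact hi₁
          simp only [Pi.neg_apply]
          cases lt_or_eq_of_le h2 with
          | inl h => linarith
          | inr h => exact absurd h this

lemma isClosed_subcone {N : ℕ} (v : Fin N → E) (s : Finset (Fin N))
    (hs : LinearIndependent ℝ (fun i : s => v i)) :
    IsClosed {x : E | ∃ c : s → ℝ, (∀ i, 0 ≤ c i) ∧ ∑ i, c i • v i = x} := by
  classical
  let f : (s → ℝ) →ₗ[ℝ] E :=
    { toFun := fun c => ∑ i, c i • v i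
      map_add' := fun a b => by simp [add_smul, Finset.sum_add_distrib]
      map_smul' := fun t a => by simp [smul_smul, Finset.smul_sum] }
  have hker : LinearMap.ker f = ⊥ := by
    rw [LinearMap.ker_eq_bot']
    intro c hcf
    have := Fintype.linearIndependent_iff.mp hs c hcf
    funext i
    exact this i
  have hCE := f.isClosedEmbedding_of_injective hker
  have : {x : E | ∃ c : s → ℝ, (∀ i, 0 ≤ c i) ∧ ∑ i, c i • v i = x}
      = f '' {c : s → ℝ | ∀ i, 0 ≤ c i} := by
    ext x
    simp only [Set.mem_setOf_eq, Set.mem_image]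
    exact ⟨fun ⟨c, h1, h2⟩ => ⟨c, h1, h2⟩, fun ⟨c, h1, h2⟩ => ⟨c, h1, h2⟩⟩
  rw [this]
  apply hCE.isClosedMap
  have : {c : s → ℝ | ∀ i, 0 ≤ c i} = Set.pi Set.univ (fun _ => Set.Ici (0:ℝ)) := by
    ext c
    simp only [Set.mem_setOf_eq, Set.mem_univ_pi, Set.mem_Ici]
  rw [this]
  exact isClosed_set_pi fun a _ => isClosed_Ici

lemma isClosed_coneSet {N : ℕ} (v : Fin N → E) : IsClosed (coneSet v) := by
  classical
  have hdecomp : coneSet v = ⋃ s : Finset (Fin N),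
      (if LinearIndependent ℝ (fun i : s => v i) then
        {x : E | ∃ c : s → ℝ, (∀ i, 0 ≤ c i) ∧ ∑ i, c i • v i = x} else ∅) := by
    ext x
    simp only [Set.mem_iUnion]
    constructor
    · rintro ⟨c, hc, rfl⟩
      obtain ⟨c', hc', heq, hli⟩ := carath v _ c le_rfl hc
      set s : Finset (Fin N) := Finset.univ.filter fun i => c' i ≠ 0 with hsdef
      have hmem : ∀ i, i ∈ s ↔ c' i ≠ 0 := fun i => by simp [hsdef]
      have hli' : LinearIndependent ℝ (fun i : s => v i) := by
        set e : {i // i ∈ s} ≃ {i // c' i ≠ 0} := Equiv.subtypeEquivRight hmem with he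
        have hco : ((fun i : {i // c' i ≠ 0} => v ↑i) ∘ e) = fun i : s => v ↑i := by
          funext i
          rfl
        rw [← hco]
        exact hli.comp e e.injective
      refine ⟨s, ?_⟩
      rw [if_pos hli']
      refine ⟨fun i => c' i, fun i => hc' i, ?_⟩
      calc ∑ i : {i // i ∈ s}, c' ↑i • v ↑i
          = ∑ i ∈ s, c' i • v i :=
            (Finset.sum_subtype s (fun i => Iff.rfl) (fun i => c' i • v i)).symm
        _ = ∑ i, c' i • v i := by
            rw [hsdef]
            exact Finset.sum_filter_of_ne
              (fun i _ h h0 => h (by rw [h0, zero_smul]))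
        _ = ∑ i, c i • v i := heq
    · rintro ⟨s, hx⟩
      by_cases hli : LinearIndependent ℝ (fun i : s => v i)
      · rw [if_pos hli] at hx
        obtain ⟨c, hc, heq⟩ := hx
        refine ⟨fun i => if h : i ∈ s then c ⟨i, h⟩ else 0, ?_, ?_⟩
        · intro i
          by_cases h : i ∈ s <;> simp [h, hc]
        · rw [← heq]
          rw [← Finset.sum_subset (Finset.subset_univ s)
            (fun i _ hi => by simp [hi])]
          rw [Finset.sum_subtype s (fun i => Iff.rfl)
            (fun i => (if h : i ∈ s then c ⟨i, h⟩ else 0) • v i)]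
          apply Finset.sum_congr rfl
          rintro ⟨i, hi⟩ _
          simp [hi]
      · rw [if_neg hli] at hx
        exact absurd hx (Set.notMem_empty x)
  rw [hdecomp]
  apply isClosed_iUnion_of_finite
  intro s
  by_cases hli : LinearIndependent ℝ (fun i : s => v i)
  · rw [if_pos hli]; exact isClosed_subcone v s hli
  · rw [if_neg hli]; exact isClosed_empty

/-- the cone, as a `ConvexCone` -/
def coneCone {N : ℕ} (v : Fin N → E) : ConvexCone ℝ E where
  carrier := coneSet v
  smul_mem' := by
    rintro t ht x ⟨c, hc, rfl⟩
    exact ⟨fun i => t * c i, fun i => mul_nonneg ht.le (hc i),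
      by rw [Finset.smul_sum]; congr 1; ext i; rw [smul_smul]⟩
  add_mem' := by
    rintro x ⟨c, hc, rfl⟩ y ⟨c', hc', rfl⟩
    exact ⟨fun i => c i + c' i, fun i => add_nonneg (hc i) (hc' i),
      by rw [← Finset.sum_add_distrib]; congr 1; ext i; rw [add_smul]⟩

open scoped InnerProductSpace in
lemma farkas_sep {N : ℕ} (v : Fin N → E) (b : E) (hb : b ∉ coneSet v) :
    ∃ y : E, (∀ i, 0 ≤ ⟪v i, y⟫_ℝ) ∧ ⟪y, b⟫_ℝ < 0 := by
  classical
  have h0 : (0 : E) ∈ coneSet v := ⟨0, fun i => le_rfl, by simp⟩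
  obtain ⟨y, hy1, hy2⟩ :=
    ProperCone.hyperplane_separation' (⟨(coneCone v).toPointedCone h0, isClosed_coneSet v⟩ :
      ProperCone ℝ E) (x₀ := b) hb
  rw [real_inner_comm] at hy2
  refine ⟨y, fun i => hy1 _ (show v i ∈ coneSet v from ?_), hy2⟩
  refine ⟨Pi.single i 1, fun j => by by_cases h : j = i <;> simp [Pi.single_apply, h], ?_⟩
  simp [Pi.single_apply, ite_smul]

end Cone

open scoped InnerProductSpace in
lemma farkas_pi {d N : ℕ} (w : Fin N → (Fin d → ℝ)) (b : Fin d → ℝ)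
    (h : ∀ y : Fin d → ℝ, (∀ i, 0 ≤ ∑ t, w i t * y t) → 0 ≤ ∑ t, b t * y t) :
    ∃ c : Fin N → ℝ, (∀ i, 0 ≤ c i) ∧ ∀ t, ∑ i, c i * w i t = b t := by
  classical
  set L := WithLp.linearEquiv 2 ℝ (Fin d → ℝ) with hL
  set v : Fin N → EuclideanSpace ℝ (Fin d) := fun i => L.symm (w i) with hv
  have hb : L.symm b ∈ coneSet v := by
    by_contra hb
    obtain ⟨y, hy1, hy2⟩ := farkas_sep v (L.symm b) hb
    have hinner : ∀ (z : Fin d → ℝ),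
        ⟪L.symm z, y⟫_ℝ = ∑ t, z t * (L y) t := by
      intro z
      rw [PiLp.inner_apply]
      apply Finset.sum_congr rfl
      intro t _
      simp [RCLike.inner_apply, hL, mul_comm]
    have h1 : ∀ i, 0 ≤ ∑ t, w i t * (L y) t := fun i => by
      rw [← hinner (w i)]; exact hy1 i
    have h2 := h (L y) h1
    rw [← hinner b, real_inner_comm] at h2
    exact absurd hy2 (not_lt.mpr h2)
  obtain ⟨c, hc, hsum⟩ := hb
  refine ⟨c, hc, fun t => ?_⟩
  have := congrArg L hsum
  rw [map_sum] at this
  simp only [_root_.map_smul, hv, LinearEquiv.apply_symm_apply] at this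
  have := congrFun this t
  simpa [Finset.sum_apply, Pi.smul_apply, smul_eq_mul] using this

/-- Polyhedral containment duality (core of Lemma 2 / Theorem 2): for a nonempty
polyhedron `{x | Φ.mulVec x ≤ ψ}`, the containment in `{x | R.mulVec x ≤ r}` holds iff
it is certified by an entrywise-nonnegative dual matrix `Pdual` with `Φᵀ * Pdual = Rᵀ` and
`Pdualᵀ.mulVec ψ ≤ r`. -/
theorem polyhedral_containment_duality
    (m n k : ℕ) (Φ : Matrix (Fin m) (Fin n) ℝ) (ψ : Fin m → ℝ)
    (R : Matrix (Fin k) (Fin n) ℝ) (r : Fin k → ℝ)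
    (hne : {x : Fin n → ℝ | Φ.mulVec x ≤ ψ}.Nonempty) :
    (∀ x : Fin n → ℝ, Φ.mulVec x ≤ ψ → R.mulVec x ≤ r) ↔
      ∃ Pdual : Matrix (Fin m) (Fin k) ℝ,
        (∀ i j, 0 ≤ Pdual i j) ∧ Φᵀ * Pdual = Rᵀ ∧ Pdualᵀ.mulVec ψ ≤ r := by
  classical
  constructor
  · intro himp
    set w : Fin (m+1) → (Fin (n+1) → ℝ) :=
      Fin.snoc (fun i => Fin.snoc (fun t => Φ i t) (ψ i))
        (Fin.snoc (fun _ => 0) 1) with hw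
    have key : ∀ j : Fin k, ∃ c : Fin (m+1) → ℝ, (∀ i, 0 ≤ c i) ∧
        ∀ t : Fin (n+1), ∑ i, c i * w i t = (Fin.snoc (fun t => R j t) (r j) : Fin (n+1) → ℝ) t := by
      intro j
      apply farkas_pi
      intro y hy
      set x₀ : Fin n → ℝ := fun t => y t.castSucc with hx₀
      set t₀ : ℝ := y (Fin.last n) with ht₀
      have hsplit : ∀ z : Fin (n+1) → ℝ,
          ∑ t : Fin (n+1), z t * y t
            = ∑ t : Fin n, z t.castSucc * x₀ t + z (Fin.last n) * t₀ := by
        intro z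
        rw [Fin.sum_univ_castSucc]
      have ht₀nn : 0 ≤ t₀ := by
        have := hy (Fin.last m)
        rw [hsplit] at this
        simpa [hw, Fin.snoc_last, Fin.snoc_castSucc] using this
      have hrow : ∀ i : Fin m, 0 ≤ ∑ t, Φ i t * x₀ t + ψ i * t₀ := by
        intro i
        have := hy i.castSucc
        rw [hsplit] at this
        simpa [hw, Fin.snoc_last, Fin.snoc_castSucc] using this
      rw [hsplit]
      simp only [Fin.snoc_last, Fin.snoc_castSucc]
      rcases eq_or_lt_of_le ht₀nn with h0 | hpos
      · -- t₀ = 0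
        obtain ⟨xh, hxh⟩ := hne
        by_contra hcon
        push_neg at hcon
        have hT : ∑ t, R j t * x₀ t < 0 := by
          rw [← h0] at hcon
          simpa using hcon
        have hS : ∀ i : Fin m, 0 ≤ ∑ t, Φ i t * x₀ t := by
          intro i
          have := hrow i
          rw [← h0] at this
          simpa using this
        set s : ℝ := max 0 ((r j + 1 - ∑ t, R j t * xh t) / (- ∑ t, R j t * x₀ t)) with hs
        have hs0 : 0 ≤ s := le_max_left _ _
        have hfeas : Φ.mulVec (fun t => xh t - s * x₀ t) ≤ ψ := by
          intro i
          have h1 : (Φ.mulVec (fun t => xh t - s * x₀ t)) i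
              = Φ.mulVec xh i - s * ∑ t, Φ i t * x₀ t := by
            simp only [Matrix.mulVec, dotProduct, mul_sub, Finset.sum_sub_distrib,
              Finset.mul_sum]
            congr 1
            apply Finset.sum_congr rfl
            intro t _
            ring
          rw [h1]
          have := hxh i
          nlinarith [mul_nonneg hs0 (hS i)]
        have := himp _ hfeas j
        have h2 : (R.mulVec (fun t => xh t - s * x₀ t)) j
            = R.mulVec xh j - s * ∑ t, R j t * x₀ t := by
          simp only [Matrix.mulVec, dotProduct, mul_sub, Finset.sum_sub_distrib,
            Finset.mul_sum]
          congr 1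
          apply Finset.sum_congr rfl
          intro t _
          ring
        rw [h2] at this
        have hsge : (r j + 1 - ∑ t, R j t * xh t) / (- ∑ t, R j t * x₀ t) ≤ s :=
          le_max_right _ _
        have hTpos : 0 < - ∑ t, R j t * x₀ t := by linarith
        rw [div_le_iff₀ hTpos] at hsge
        have hRxh : R.mulVec xh j = ∑ t, R j t * xh t := by
          simp [Matrix.mulVec, dotProduct]
        rw [hRxh] at this
        nlinarith
      · -- t₀ > 0
        by_contra hcon
        push_neg at hcon
        have hfeas : Φ.mulVec (fun t => - x₀ t / t₀) ≤ ψ := by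
          intro i
          have h1 : (Φ.mulVec (fun t => - x₀ t / t₀)) i
              = (- ∑ t, Φ i t * x₀ t) / t₀ := by
            simp only [Matrix.mulVec, dotProduct]
            calc ∑ x, Φ i x * (- x₀ x / t₀)
                = ∑ x, (-(Φ i x * x₀ x)) / t₀ :=
                  Finset.sum_congr rfl (fun t _ => by ring)
              _ = (∑ x, -(Φ i x * x₀ x)) / t₀ := (Finset.sum_div _ _ _).symm
              _ = (- ∑ x, Φ i x * x₀ x) / t₀ := by rw [Finset.sum_neg_distrib]
          rw [h1, div_le_iff₀ hpos]
          have := hrow i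
          nlinarith
        have := himp _ hfeas j
        have h2 : (R.mulVec (fun t => - x₀ t / t₀)) j
            = (- ∑ t, R j t * x₀ t) / t₀ := by
          simp only [Matrix.mulVec, dotProduct]
          calc ∑ x, R j x * (- x₀ x / t₀)
              = ∑ x, (-(R j x * x₀ x)) / t₀ :=
                Finset.sum_congr rfl (fun t _ => by ring)
            _ = (∑ x, -(R j x * x₀ x)) / t₀ := (Finset.sum_div _ _ _).symm
            _ = (- ∑ x, R j x * x₀ x) / t₀ := by rw [Finset.sum_neg_distrib]
        rw [h2, div_le_iff₀ hpos] at this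
        nlinarith
    choose c hc hceq using key
    refine ⟨fun i j => c j i.castSucc, fun i j => hc j i.castSucc, ?_, ?_⟩
    · ext t j
      have := hceq j t.castSucc
      rw [Fin.sum_univ_castSucc] at this
      simp only [hw, Fin.snoc_last, Fin.snoc_castSucc, mul_zero, add_zero, mul_one] at this
      change ∑ x, Φᵀ t x * c j x.castSucc = Rᵀ t j
      simp only [Matrix.mul_apply, Matrix.transpose_apply]
      rw [← this]
      apply Finset.sum_congr rfl
      intro i _
      ring
    · intro j
      have := hceq j (Fin.last n)
      rw [Fin.sum_univ_castSucc] at this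
      simp only [hw, Fin.snoc_last, Fin.snoc_castSucc, mul_one] at this
      have hlast : 0 ≤ c j (Fin.last m) := hc j _
      have : ∑ i : Fin m, c j i.castSucc * ψ i ≤ r j := by nlinarith [this]
      calc (Matrix.transpose (fun i j => c j i.castSucc)).mulVec ψ j
          = ∑ i : Fin m, c j i.castSucc * ψ i := by
            simp [Matrix.mulVec, dotProduct, Matrix.transpose_apply, mul_comm]
            rfl
        _ ≤ r j := this
  · rintro ⟨P, hP0, hPR, hPψ⟩ x hx
    have hR : R = Pᵀ * Φ := by
      have := congrArg Matrix.transpose hPR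
      rw [Matrix.transpose_mul, Matrix.transpose_transpose, Matrix.transpose_transpose] at this
      exact this.symm
    intro j
    rw [hR, ← Matrix.mulVec_mulVec]
    calc (Pᵀ.mulVec (Φ.mulVec x)) j
        = ∑ i, P i j * (Φ.mulVec x) i := by
          simp [Matrix.mulVec, dotProduct, Matrix.transpose_apply]
      _ ≤ ∑ i, P i j * ψ i := by
          apply Finset.sum_le_sum
          intro i _
          exact mul_le_mul_of_nonneg_left (hx i) (hP0 i j)
      _ = (Pᵀ.mulVec ψ) j := by
          simp [Matrix.mulVec, dotProduct, Matrix.transpose_apply]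
      _ ≤ r j := hPψ j
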